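/- Let (M, d) be a metric space, F : M → ℝ^m, and p̂ ∈ M such that the level set W := {q ∈ M : F(q) = F(p̂)} is closed, and define F̃ : M → ℝ^m by F̃(p) := F(p) − F(p̂). If p̂ is a weak sharp minimum of F with respect to C, i.e. there exists τ > 0 such that F(p) − F(p̂) ∉ B(0, τ·d(p, W)) − C for every p ∈ M \ W, then p̂ is a weak sharp minimum of the scalarized function f ∘ F̃: there exists τ' > 0 such that f(F̃(p)) − f(F̃(p̂)) ≥ τ'·d(p, W') for all p ∈ M, where W' := {q ∈ M : f(F̃(q)) = f(F̃(p̂))} (note f(F̃(p̂)) = f(0) = 0). -/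

import Mathlib

open RealInnerProductSpace Pointwise

/-- If `p̂` is a weak sharp minimum of `F : M → ℝ^m` with respect to the cone
`C = {y : ∀ z ∈ Z, ⟪y,z⟫ ≥ 0}` — i.e. there exists `τ > 0` such that
`F p - F p̂ ∉ B(0, τ · d(p, W)) - C` for every `p ∈ M \ W`, where
`W = {q : F q = F p̂}` is closed — then `p̂` is a weak sharp minimum of the scalarized
function `f ∘ F̃`, where `F̃ p = F p - F p̂`: there exists `τ' > 0` such that
`f (F̃ p) - f (F̃ p̂) ≥ τ' · d(p, W')` for all `p`, with
`W' = {q : f (F̃ q) = f (F̃ p̂)}`. -/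
theorem weak_sharp_minimum_scalarized {m : ℕ} (hm : 1 ≤ m)
    (Z : Set (EuclideanSpace ℝ (Fin m))) (hZne : Z.Nonempty) (hZcomp : IsCompact Z)
    (hZ0 : (0 : EuclideanSpace ℝ (Fin m)) ∉ Z)
    (C : Set (EuclideanSpace ℝ (Fin m)))
    (hC : C = {y : EuclideanSpace ℝ (Fin m) | ∀ z ∈ Z, 0 ≤ ⟪y, z⟫})
    (e : EuclideanSpace ℝ (Fin m)) (he : ∀ z ∈ Z, 0 < ⟪e, z⟫)
    (f : EuclideanSpace ℝ (Fin m) → ℝ)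
    (hf : ∀ y, f y = sSup ((fun z => ⟪y, z⟫ / ⟪e, z⟫) '' Z))
    {M : Type*} [MetricSpace M] (F : M → EuclideanSpace ℝ (Fin m)) (phat : M)
    (hWclosed : IsClosed {q : M | F q = F phat})
    (τ : ℝ) (hτ : 0 < τ)
    (hsharp : ∀ p : M, F p ≠ F phat →
      F p - F phat ∉
        Metric.ball (0 : EuclideanSpace ℝ (Fin m))
          (τ * Metric.infDist p {q : M | F q = F phat}) - C) :
    ∃ τ' : ℝ, 0 < τ' ∧ ∀ p : M,
      f (F p - F phat) - f (F phat - F phat) ≥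
        τ' * Metric.infDist p {q : M | f (F q - F phat) = f (F phat - F phat)} := by

  classical
  -- basic facts about f
  have hub : ∀ y : EuclideanSpace ℝ (Fin m), ∀ z ∈ Z, ⟪y, z⟫ / ⟪e, z⟫ ≤ f y := by
    intro y z hz
    rw [hf y]
    refine le_csSup ?_ ⟨z, hz, rfl⟩
    refine (hZcomp.image_of_continuousOn ?_).bddAbove
    exact ContinuousOn.div
      ((continuous_const.inner continuous_id).continuousOn)
      ((continuous_const.inner continuous_id).continuousOn)
      (fun z hz => ne_of_gt (he z hz))
  have hub' : ∀ y : EuclideanSpace ℝ (Fin m), ∀ z ∈ Z, ⟪y, z⟫ ≤ f y * ⟪e, z⟫ := by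
    intro y z hz
    have := hub y z hz
    rwa [div_le_iff₀ (he z hz)] at this
  have hf0 : f 0 = 0 := by
    rw [hf 0]
    have : (fun z => ⟪(0 : EuclideanSpace ℝ (Fin m)), z⟫ / ⟪e, z⟫) '' Z = {0} := by
      apply Set.eq_singleton_iff_nonempty_unique_mem.mpr
      constructor
      · obtain ⟨z, hz⟩ := hZne
        exact ⟨_, ⟨z, hz, rfl⟩⟩
      · rintro x ⟨z, hz, rfl⟩
        simp [inner_zero_left]
    rw [this, csSup_singleton]
  obtain ⟨z0, hz0⟩ := hZne
  have hene : (0:ℝ) < ‖e‖ := by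
    rw [norm_pos_iff]
    intro h
    have := he z0 hz0
    rw [h, inner_zero_left] at this
    exact lt_irrefl _ this
  set W : Set M := {q : M | F q = F phat} with hW
  set W' : Set M := {q : M | f (F q - F phat) = f (F phat - F phat)} with hW'
  have hWsub : W ⊆ W' := by
    intro q hq
    simp only [hW', Set.mem_setOf_eq, hW] at *
    rw [hq]
  have hWne : W.Nonempty := ⟨phat, rfl⟩
  have hdle : ∀ p : M, Metric.infDist p W' ≤ Metric.infDist p W :=
    fun p => Metric.infDist_le_infDist_of_subset hWsub hWne
  -- key estimate
  have key : ∀ p : M, F p ≠ F phat →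
      τ * Metric.infDist p W ≤ f (F p - F phat) * ‖e‖ := by
    intro p hp
    set y := F p - F phat with hy
    have hdpos : 0 < Metric.infDist p W := by
      rw [← hWclosed.notMem_iff_infDist_pos hWne]
      exact hp
    have hrpos : 0 < τ * Metric.infDist p W := mul_pos hτ hdpos
    have hfy0 : 0 ≤ f y := by
      by_contra hneg
      push_neg at hneg
      apply hsharp p hp
      refine Set.mem_sub.mpr ⟨0, ?_, -y, ?_, by simp [hy]⟩
      · simpa [Metric.mem_ball] using hrpos
      · rw [hC]
        intro z hz
        have h1 := hub' y z hz
        have h2 : f y * ⟪e, z⟫ < 0 := mul_neg_of_neg_of_pos hneg (he z hz)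
        rw [inner_neg_left]
        linarith
    by_contra hcon
    push_neg at hcon
    apply hsharp p hp
    refine Set.mem_sub.mpr ⟨f y • e, ?_, f y • e - y, ?_, by rw [sub_sub_cancel]⟩
    · rw [Metric.mem_ball, dist_zero_right, norm_smul, Real.norm_eq_abs,
        abs_of_nonneg hfy0]
      exact hcon
    · rw [hC]
      intro z hz
      rw [inner_sub_left, real_inner_smul_left]
      have := hub' y z hz
      linarith
  refine ⟨τ / ‖e‖, div_pos hτ hene, fun p => ?_⟩
  have hFph : F phat - F phat = 0 := by abel
  rw [hFph, hf0, sub_zero, ge_iff_le]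
  by_cases hp : F p = F phat
  · have hpW' : p ∈ W' := hWsub hp
    rw [Metric.infDist_zero_of_mem hpW']
    have : F p - F phat = 0 := by rw [hp]; abel
    rw [this, hf0, mul_zero]
  · have h1 := key p hp
    have h2 : τ / ‖e‖ * Metric.infDist p W' ≤ τ / ‖e‖ * Metric.infDist p W := by
      apply mul_le_mul_of_nonneg_left (hdle p) (le_of_lt (div_pos hτ hene))
    calc τ / ‖e‖ * Metric.infDist p W' ≤ τ / ‖e‖ * Metric.infDist p W := h2
      _ ≤ f (F p - F phat) := by
          rw [div_mul_eq_mul_div, div_le_iff₀ hene]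
          linarith
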